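/- Let G be extremely amenable, 𝒢 = (G₀, G₁) a locally trivial transitive topological groupoid with isotropy groups isomorphic to G, and α : X ×_{ρ,s} G₁ → X a continuous right action with proper anchor map ρ : X → G₀. Then there exists a continuous 𝒢-invariant section σ : G₀ → X of ρ, i.e. ρ ∘ σ = id and σ(t(g)) = σ(s(g))•g for every g ∈ G₁. -/

import Mathlib

/-- A (transitive-style) topological groupoid presented by its object space `G₀`,
arrow space `G₁` and structure maps, following the convention of the paper:
`s(gh) = s(g)` and `t(gh) = t(h)`. -/
structure TopGroupoid (G₀ G₁ : Type*) [TopologicalSpace G₀] [TopologicalSpace G₁] where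
  s : G₁ → G₀
  t : G₁ → G₀
  comp : (g h : G₁) → t g = s h → G₁
  unit : G₀ → G₁
  inv : G₁ → G₁
  s_comp : ∀ g h hgh, s (comp g h hgh) = s g
  t_comp : ∀ g h hgh, t (comp g h hgh) = t h
  s_unit : ∀ x, s (unit x) = x
  t_unit : ∀ x, t (unit x) = x
  unit_comp : ∀ g (h : t (unit (s g)) = s g), comp (unit (s g)) g h = g
  comp_unit : ∀ g (h : t g = s (unit (t g))), comp g (unit (t g)) h = g
  s_inv : ∀ g, s (inv g) = t g
  t_inv : ∀ g, t (inv g) = s g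
  comp_inv : ∀ g (h : t g = s (inv g)), comp g (inv g) h = unit (s g)
  inv_comp : ∀ g (h : t (inv g) = s g), comp (inv g) g h = unit (t g)
  assoc : ∀ g h k (hgh : t g = s h) (hhk : t h = s k)
    (h1 : t (comp g h hgh) = s k) (h2 : t g = s (comp h k hhk)),
    comp (comp g h hgh) k h1 = comp g (comp h k hhk) h2
  cont_s : Continuous s
  cont_t : Continuous t
  cont_unit : Continuous unit
  cont_inv : Continuous inv
  cont_comp : Continuous fun q : {q : G₁ × G₁ // t q.1 = s q.2} => comp q.1.1 q.1.2 q.2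

/-- A topological groupoid is locally trivial if every `x ∈ G₀` has an open
neighborhood `U` with a continuous section `τ : U → G₁` of the target map `t`
such that `s ∘ τ` is the constant map `x`. -/
def TopGroupoid.LocallyTrivial {G₀ G₁ : Type*} [TopologicalSpace G₀] [TopologicalSpace G₁]
    (𝒢 : TopGroupoid G₀ G₁) : Prop :=
  ∀ x : G₀, ∃ U : Set G₀, IsOpen U ∧ x ∈ U ∧
    ∃ τ : G₀ → G₁, ContinuousOn τ U ∧ ∀ y ∈ U, 𝒢.t (τ y) = y ∧ 𝒢.s (τ y) = x

/-- A groupoid is transitive if there is an arrow between any two objects. -/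
def TopGroupoid.Transitive {G₀ G₁ : Type*} [TopologicalSpace G₀] [TopologicalSpace G₁]
    (𝒢 : TopGroupoid G₀ G₁) : Prop :=
  ∀ x y : G₀, ∃ g : G₁, 𝒢.s g = x ∧ 𝒢.t g = y
universe u

/-- A topological group `G` is extremely amenable if every continuous action of `G`
on a nonempty compact Hausdorff space has a fixed point. -/
def ExtremelyAmenable (G : Type*) [Group G] [TopologicalSpace G] : Prop :=
  ∀ (X : Type u) [TopologicalSpace X] [CompactSpace X] [T2Space X] [Nonempty X]
    (a : G → X → X), (Continuous fun q : G × X => a q.1 q.2) →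
    (∀ x, a 1 x = x) → (∀ g h x, a (g * h) x = a g (a h x)) →
    ∃ x : X, ∀ g : G, a g x = x

/-- Two compositions with equal factors are equal (proofs are irrelevant). -/
lemma TopGroupoid.comp_congr {G₀ G₁ : Type*} [TopologicalSpace G₀] [TopologicalSpace G₁]
    (𝒢 : TopGroupoid G₀ G₁) {g g' h h' : G₁} (eg : g = g') (eh : h = h')
    (p : 𝒢.t g = 𝒢.s h) (p' : 𝒢.t g' = 𝒢.s h') :
    𝒢.comp g h p = 𝒢.comp g' h' p' := by subst eg; subst eh; rfl

/-- An idempotent arrow in a groupoid is a unit. -/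
lemma TopGroupoid.idem_eq_unit {G₀ G₁ : Type*} [TopologicalSpace G₀] [TopologicalSpace G₁]
    (𝒢 : TopGroupoid G₀ G₁) {k : G₁} (p : 𝒢.t k = 𝒢.s k)
    (hkk : k = 𝒢.comp k k p) : k = 𝒢.unit (𝒢.s k) := by
  have pb : 𝒢.t k = 𝒢.s (𝒢.inv k) := (𝒢.s_inv k).symm
  have pa : 𝒢.t (𝒢.comp k k p) = 𝒢.s (𝒢.inv k) := by rw [𝒢.t_comp]; exact pb
  have pc : 𝒢.t k = 𝒢.s (𝒢.comp k (𝒢.inv k) pb) := by rw [𝒢.s_comp]; exact p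
  have h5 := 𝒢.assoc k k (𝒢.inv k) p pb pa pc
  have hL : 𝒢.comp (𝒢.comp k k p) (𝒢.inv k) pa = 𝒢.unit (𝒢.s k) := by
    rw [𝒢.comp_congr hkk.symm rfl pa pb, 𝒢.comp_inv]
  have pc2 : 𝒢.t k = 𝒢.s (𝒢.unit (𝒢.s k)) := by rw [𝒢.s_unit]; exact p
  have pM : 𝒢.t k = 𝒢.s (𝒢.unit (𝒢.t k)) := (𝒢.s_unit _).symm
  have hR : 𝒢.comp k (𝒢.comp k (𝒢.inv k) pb) pc = k := by
    rw [𝒢.comp_congr rfl (𝒢.comp_inv k pb) pc pc2,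
      𝒢.comp_congr rfl (congrArg 𝒢.unit p.symm) pc2 pM]
    exact 𝒢.comp_unit k pM
  rw [hL, hR] at h5
  exact h5.symm

/-- Let `G` be extremely amenable, `𝒢 = (G₀, G₁)` a locally trivial transitive
topological groupoid whose isotropy groups are (topologically) isomorphic to `G`, and
`act` a continuous right action of `𝒢` on `Y` with proper surjective anchor
`ρ : Y → G₀`.  Then there is a continuous `𝒢`-invariant section `σ : G₀ → Y` of `ρ`:
`ρ ∘ σ = id` and `σ(t g) = σ(s g)•g` for every arrow `g`. -/
theorem extremely_amenable_gives_invariant_section {G : Type u} [Group G]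
    [TopologicalSpace G] [IsTopologicalGroup G]
    {G₀ G₁ Y : Type u} [TopologicalSpace G₀] [TopologicalSpace G₁]
    [TopologicalSpace Y] [T2Space G₀] [T2Space G₁] [T2Space Y]
    (hEA : ExtremelyAmenable.{u} G)
    (𝒢 : TopGroupoid G₀ G₁) (hlt : 𝒢.LocallyTrivial) (htr : 𝒢.Transitive)
    (hiso : ∀ x : G₀, ∃ e : G ≃ₜ {k : G₁ // 𝒢.s k = x ∧ 𝒢.t k = x},
      ∀ g h : G, ((e (g * h) : {k : G₁ // 𝒢.s k = x ∧ 𝒢.t k = x}) : G₁)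
        = 𝒢.comp ((e g : {k : G₁ // 𝒢.s k = x ∧ 𝒢.t k = x}) : G₁)
            ((e h : {k : G₁ // 𝒢.s k = x ∧ 𝒢.t k = x}) : G₁)
            ((e g).2.2.trans (e h).2.1.symm))
    (ρ : Y → G₀) (hρc : Continuous ρ)
    (hρproper : IsProperMap ρ) (hρsurj : Function.Surjective ρ)
    (act : (y : Y) → (g : G₁) → 𝒢.s g = ρ y → Y)
    (hρa : ∀ y g hg, ρ (act y g hg) = 𝒢.t g)
    (hacomp : ∀ (y : Y) (g : G₁) (hg : 𝒢.s g = ρ y) (h : G₁)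
      (hh : 𝒢.t g = 𝒢.s h) (hh' : 𝒢.s h = ρ (act y g hg))
      (hgh : 𝒢.s (𝒢.comp g h hh) = ρ y),
      act (act y g hg) h hh' = act y (𝒢.comp g h hh) hgh)
    (haunit : ∀ (y : Y) (h : 𝒢.s (𝒢.unit (ρ y)) = ρ y),
      act y (𝒢.unit (ρ y)) h = y)
    (hacont : Continuous fun q : {q : Y × G₁ // 𝒢.s q.2 = ρ q.1} =>
      act q.1.1 q.1.2 q.2) :
    ∃ σ : G₀ → Y, Continuous σ ∧ (∀ x, ρ (σ x) = x) ∧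
      ∀ (g : G₁) (hg : 𝒢.s g = ρ (σ (𝒢.s g))),
        act (σ (𝒢.s g)) g hg = σ (𝒢.t g) := by
  rcases isEmpty_or_nonempty G₀ with hG₀ | hG₀
  · refine ⟨fun x => (IsEmpty.false x).elim, ?_, fun x => (IsEmpty.false x).elim,
      fun g => ((IsEmpty.false (𝒢.s g)).elim)⟩
    rw [continuous_def]; intro s _
    rw [Set.eq_empty_of_isEmpty (_ ⁻¹' s)]; exact isOpen_empty
  obtain ⟨x₀⟩ := hG₀
  have act_congr : ∀ (y : Y) (g g' : G₁) (e : g = g') (p : 𝒢.s g = ρ y)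
      (p' : 𝒢.s g' = ρ y), act y g p = act y g' p' := by
    rintro y g g' rfl p p'; rfl
  have act_congr_y : ∀ (y y' : Y) (hy : y = y') (g : G₁) (p : 𝒢.s g = ρ y)
      (p' : 𝒢.s g = ρ y'), act y g p = act y' g p' := by
    rintro y y' rfl g p p'; rfl
  obtain ⟨e, hmul⟩ := hiso x₀
  have e_one : ((e 1).1 : G₁) = 𝒢.unit x₀ := by
    have hkk : ((e 1).1 : G₁)
        = 𝒢.comp (e 1).1 (e 1).1 ((e 1).2.2.trans ((e 1).2.1.symm)) := by
      have h := hmul 1 1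
      rw [one_mul] at h
      exact h
    have h2 := 𝒢.idem_eq_unit _ hkk
    rw [h2, (e 1).2.1]
  -- the fixed point in the fiber over x₀
  have hy₀' : ∃ y₀ : Y, ρ y₀ = x₀ ∧ ∀ (k : G₁) (hks : 𝒢.s k = x₀) (hkt : 𝒢.t k = x₀)
      (pk : 𝒢.s k = ρ y₀), act y₀ k pk = y₀ := by
    have hcpt : IsCompact {y : Y | ρ y = x₀} := by
      have h := hρproper.isCompact_preimage (isCompact_singleton (x := x₀))
      simpa [Set.preimage] using h
    haveI : CompactSpace {y : Y // ρ y = x₀} := isCompact_iff_compactSpace.mp hcpt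
    haveI : Nonempty {y : Y // ρ y = x₀} := ⟨⟨(hρsurj x₀).choose, (hρsurj x₀).choose_spec⟩⟩
    have pact : ∀ (g : G) (y : {y : Y // ρ y = x₀}), 𝒢.s ((e g⁻¹).1 : G₁) = ρ y.1 :=
      fun g y => (e g⁻¹).2.1.trans y.2.symm
    have pact2 : ∀ (g : G) (y : {y : Y // ρ y = x₀}),
        ρ (act y.1 (e g⁻¹).1 (pact g y)) = x₀ :=
      fun g y => (hρa _ _ _).trans (e g⁻¹).2.2
    have hconta : Continuous fun q : G × {y : Y // ρ y = x₀} =>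
        (⟨act q.2.1 (e q.1⁻¹).1 (pact q.1 q.2), pact2 q.1 q.2⟩ : {y : Y // ρ y = x₀}) := by
      apply Continuous.subtype_mk
      have hinner : Continuous fun q : G × {y : Y // ρ y = x₀} =>
          (⟨(q.2.1, ((e q.1⁻¹).1 : G₁)), pact q.1 q.2⟩ : {q : Y × G₁ // 𝒢.s q.2 = ρ q.1}) :=
        Continuous.subtype_mk (Continuous.prodMk (continuous_subtype_val.comp continuous_snd)
          (continuous_subtype_val.comp (e.continuous.comp continuous_fst.inv)))
          (fun q => pact q.1 q.2)
      exact hacont.comp hinner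
    have hone : ∀ y : {y : Y // ρ y = x₀},
        (⟨act y.1 (e (1 : G)⁻¹).1 (pact 1 y), pact2 1 y⟩ : {y : Y // ρ y = x₀}) = y := by
      intro y
      apply Subtype.ext
      have h1 : ((e (1 : G)⁻¹).1 : G₁) = 𝒢.unit (ρ y.1) := by
        rw [inv_one, e_one, y.2]
      exact (act_congr y.1 _ _ h1 _ ((𝒢.s_unit _))).trans (haunit y.1 _)
    have hmula : ∀ (g h : G) (y : {y : Y // ρ y = x₀}),
        (⟨act y.1 (e (g * h)⁻¹).1 (pact (g * h) y), pact2 (g * h) y⟩ : {y : Y // ρ y = x₀})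
          = ⟨act (act y.1 (e h⁻¹).1 (pact h y)) (e g⁻¹).1
              (pact g ⟨act y.1 (e h⁻¹).1 (pact h y), pact2 h y⟩),
             pact2 g ⟨act y.1 (e h⁻¹).1 (pact h y), pact2 h y⟩⟩ := by
      intro g h y
      apply Subtype.ext
      have h2 : ((e (g * h)⁻¹).1 : G₁)
          = 𝒢.comp (e h⁻¹).1 (e g⁻¹).1 ((e h⁻¹).2.2.trans ((e g⁻¹).2.1.symm)) := by
        rw [mul_inv_rev]; exact hmul _ _
      have hh' : 𝒢.s ((e g⁻¹).1 : G₁) = ρ (act y.1 (e h⁻¹).1 (pact h y)) :=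
        (e g⁻¹).2.1.trans (pact2 h y).symm
      have hgh : 𝒢.s (𝒢.comp (e h⁻¹).1 (e g⁻¹).1 ((e h⁻¹).2.2.trans ((e g⁻¹).2.1.symm)))
          = ρ y.1 := (𝒢.s_comp _ _ _).trans (pact h y)
      exact (act_congr y.1 _ _ h2 _ hgh).trans (hacomp y.1 _ (pact h y) _ _ hh' hgh).symm
    obtain ⟨yF, hyF⟩ := hEA {y : Y // ρ y = x₀}
      (fun g y => ⟨act y.1 (e g⁻¹).1 (pact g y), pact2 g y⟩) hconta hone hmula
    refine ⟨yF.1, yF.2, ?_⟩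
    intro k hks hkt pk
    have hk : ((e ((e.symm ⟨k, hks, hkt⟩)⁻¹)⁻¹).1 : G₁) = k := by
      rw [inv_inv, Homeomorph.apply_symm_apply]
    have h3 := congrArg Subtype.val (hyF ((e.symm ⟨k, hks, hkt⟩)⁻¹))
    exact (act_congr yF.1 _ k hk _ pk).symm.trans h3
  obtain ⟨y₀, hy₀ρ, hfix⟩ := hy₀'
  choose arr harrs harrt using htr x₀
  -- well-definedness of transport
  have key : ∀ (g g' : G₁) (hg : 𝒢.s g = x₀) (hg' : 𝒢.s g' = x₀) (htt : 𝒢.t g = 𝒢.t g')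
      (pg : 𝒢.s g = ρ y₀) (pg' : 𝒢.s g' = ρ y₀), act y₀ g pg = act y₀ g' pg' := by
    intro g g' hg hg' htt pg pg'
    have h : 𝒢.t g = 𝒢.s (𝒢.inv g') := by rw [𝒢.s_inv]; exact htt
    have hks : 𝒢.s (𝒢.comp g (𝒢.inv g') h) = x₀ := (𝒢.s_comp _ _ _).trans hg
    have hkt : 𝒢.t (𝒢.comp g (𝒢.inv g') h) = x₀ := by
      rw [𝒢.t_comp, 𝒢.t_inv]; exact hg'
    have h2 : 𝒢.t (𝒢.comp g (𝒢.inv g') h) = 𝒢.s g' := hkt.trans hg'.symm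
    have hcomp : 𝒢.comp (𝒢.comp g (𝒢.inv g') h) g' h2 = g := by
      have pb : 𝒢.t (𝒢.inv g') = 𝒢.s g' := 𝒢.t_inv g'
      have h2'' : 𝒢.t g = 𝒢.s (𝒢.comp (𝒢.inv g') g' pb) := by
        rw [𝒢.s_comp, 𝒢.s_inv]; exact htt
      have pN : 𝒢.t g = 𝒢.s (𝒢.unit (𝒢.t g')) := by rw [𝒢.s_unit]; exact htt
      have pM : 𝒢.t g = 𝒢.s (𝒢.unit (𝒢.t g)) := (𝒢.s_unit _).symm
      rw [𝒢.assoc g (𝒢.inv g') g' h pb h2 h2'',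
        𝒢.comp_congr rfl (𝒢.inv_comp g' pb) h2'' pN,
        𝒢.comp_congr rfl (congrArg 𝒢.unit htt.symm) pN pM]
      exact 𝒢.comp_unit g pM
    have pk : 𝒢.s (𝒢.comp g (𝒢.inv g') h) = ρ y₀ := hks.trans hy₀ρ.symm
    have hh' : 𝒢.s g' = ρ (act y₀ (𝒢.comp g (𝒢.inv g') h) pk) :=
      hg'.trans ((hρa _ _ _).trans hkt).symm
    have hgh : 𝒢.s (𝒢.comp (𝒢.comp g (𝒢.inv g') h) g' h2) = ρ y₀ :=
      (𝒢.s_comp _ _ _).trans pk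
    calc act y₀ g pg = act y₀ (𝒢.comp (𝒢.comp g (𝒢.inv g') h) g' h2) hgh :=
          act_congr _ _ _ hcomp.symm _ _
      _ = act (act y₀ (𝒢.comp g (𝒢.inv g') h) pk) g' hh' :=
          (hacomp y₀ _ pk g' h2 hh' hgh).symm
      _ = act y₀ g' pg' := act_congr_y _ _ (hfix _ hks hkt pk) g' _ pg'
  refine ⟨fun x => act y₀ (arr x) ((harrs x).trans hy₀ρ.symm), ?_, ?_, ?_⟩
  · -- continuity
    rw [continuous_iff_continuousAt]
    intro x
    obtain ⟨U, hUo, hxU, τ, hτc, hτ⟩ := hlt x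
    have h1 : ∀ u : U, 𝒢.t (arr x) = 𝒢.s (τ u) := fun u =>
      (harrt x).trans (hτ u u.2).2.symm
    have h2 : ∀ u : U, 𝒢.s (𝒢.comp (arr x) (τ u) (h1 u)) = ρ y₀ := fun u =>
      (𝒢.s_comp _ _ _).trans ((harrs x).trans hy₀ρ.symm)
    have hm : Continuous (fun u : U => act y₀ (𝒢.comp (arr x) (τ u) (h1 u)) (h2 u)) := by
      have hin1 : Continuous fun u : U =>
          (⟨(arr x, τ u), h1 u⟩ : {q : G₁ × G₁ // 𝒢.t q.1 = 𝒢.s q.2}) :=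
        Continuous.subtype_mk (Continuous.prodMk continuous_const hτc.restrict) h1
      have hcc : Continuous fun u : U => 𝒢.comp (arr x) (τ u) (h1 u) := 𝒢.cont_comp.comp hin1
      have hin2 : Continuous fun u : U =>
          (⟨(y₀, 𝒢.comp (arr x) (τ u) (h1 u)), h2 u⟩ : {q : Y × G₁ // 𝒢.s q.2 = ρ q.1}) :=
        Continuous.subtype_mk (Continuous.prodMk continuous_const hcc) h2
      exact hacont.comp hin2
    have hco : ContinuousOn (fun x' => act y₀ (arr x') ((harrs x').trans hy₀ρ.symm)) U := by
      rw [continuousOn_iff_continuous_restrict]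
      have hres : U.domRestrict (fun x' => act y₀ (arr x') ((harrs x').trans hy₀ρ.symm))
          = fun u : U => act y₀ (𝒢.comp (arr x) (τ u) (h1 u)) (h2 u) := by
        funext u
        exact key _ _ (harrs _) ((𝒢.s_comp _ _ _).trans (harrs x))
          ((harrt _).trans (((𝒢.t_comp _ _ _).trans (hτ u u.2).1).symm)) _ _
      rw [hres]; exact hm
    exact hco.continuousAt (hUo.mem_nhds hxU)
  · intro x
    exact (hρa _ _ _).trans (harrt x)
  · intro g hg
    have h1 : 𝒢.t (arr (𝒢.s g)) = 𝒢.s g := harrt _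
    have hgh : 𝒢.s (𝒢.comp (arr (𝒢.s g)) g h1) = ρ y₀ :=
      (𝒢.s_comp _ _ _).trans ((harrs _).trans hy₀ρ.symm)
    exact (hacomp y₀ (arr (𝒢.s g)) _ g h1 hg hgh).trans
      (key _ _ ((𝒢.s_comp _ _ _).trans (harrs _)) (harrs _)
        ((𝒢.t_comp _ _ _).trans (harrt _).symm) hgh _)
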